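/- If a Type II Z4-code of length n exists, then n ≡ 0 (mod 8). -/

import Mathlib

open Finset

/-- Euclidean weight of a vector over `ZMod 4`: `n1 + 4*n2 + n3`. -/
def euclWt {n : ℕ} (x : Fin n → ZMod 4) : ℕ :=
  (univ.filter fun i => x i = 1).card + 4 * (univ.filter fun i => x i = 2).card
    + (univ.filter fun i => x i = 3).card

/-- A `ZMod 4`-code is self-dual if it equals its dual under the standard inner product. -/
def IsSelfDualZ4 {n : ℕ} (C : Submodule (ZMod 4) (Fin n → ZMod 4)) : Prop :=
  ∀ x, x ∈ C ↔ ∀ y ∈ C, ∑ i, x i * y i = 0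

/-- reduction mod 2 -/
def res : ZMod 4 →+* ZMod 2 := ZMod.castHom (by norm_num : (2:ℕ) ∣ 4) (ZMod 2)


noncomputable def z8 : ℂ := Complex.exp (2 * Real.pi * Complex.I / 8)

lemma z8_prim : IsPrimitiveRoot z8 8 := Complex.isPrimitiveRoot_exp 8 (by norm_num)

lemma z8_pow8 : z8 ^ 8 = 1 := z8_prim.pow_eq_one

lemma z8_pow4 : z8 ^ 4 = -1 := by
  have h : (z8 ^ 4) ^ 2 = 1 := by rw [← pow_mul]; exact z8_pow8
  have h4 : z8 ^ 4 ≠ 1 := fun h' => by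
    have := (IsPrimitiveRoot.pow_eq_one_iff_dvd z8_prim 4).mp h'
    omega
  rcases sq_eq_one_iff.mp h with h' | h'
  · exact absurd h' h4
  · exact h'

lemma z8_mod (m k : ℕ) (h : m % 8 = k % 8) : z8 ^ m = z8 ^ k := by
  rw [pow_eq_pow_mod m z8_pow8, pow_eq_pow_mod k z8_pow8, h]

lemma z8_pow9 : z8 ^ 9 = z8 := by rw [z8_mod 9 1 rfl, pow_one]

noncomputable def eps (a : ZMod 4) : ℂ := z8 ^ (a.val ^ 2)
noncomputable def chi (a : ZMod 4) : ℂ := z8 ^ (2 * a.val)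

lemma eps0 : eps 0 = 1 := by simp [eps, show (0 : ZMod 4).val = 0 by decide]
lemma eps1 : eps 1 = z8 := by simp [eps, show (1 : ZMod 4).val = 1 by decide]
lemma eps2 : eps 2 = -1 := by
  rw [eps, show (2 : ZMod 4).val = 2 by decide, show (2^2 : ℕ) = 4 by norm_num, z8_pow4]
lemma eps3 : eps 3 = z8 := by
  rw [eps, show (3 : ZMod 4).val = 3 by decide, show (3^2 : ℕ) = 9 by norm_num, z8_pow9]

lemma chi_zero : chi 0 = 1 := by simp [chi, show (0 : ZMod 4).val = 0 by decide]
lemma chi1 : chi 1 = z8 ^ 2 := by rw [chi, show (1 : ZMod 4).val = 1 by decide]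
lemma chi2 : chi 2 = -1 := by
  rw [chi, show (2 : ZMod 4).val = 2 by decide, show (2*2 : ℕ) = 4 by norm_num, z8_pow4]
lemma chi3 : chi 3 = -z8 ^ 2 := by
  rw [chi, show (3 : ZMod 4).val = 3 by decide, show (2*3 : ℕ) = 4 + 2 by norm_num, pow_add,
    z8_pow4]
  ring

lemma chi_add (a b : ZMod 4) : chi (a + b) = chi a * chi b := by
  unfold chi
  rw [← pow_add]
  apply z8_mod
  have hv : (a + b).val = (a.val + b.val) % 4 := ZMod.val_add a b
  omega

lemma chi_sum {ι : Type*} (s : Finset ι) (f : ι → ZMod 4) :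
    chi (∑ i ∈ s, f i) = ∏ i ∈ s, chi (f i) := by
  classical
  induction s using Finset.induction with
  | empty => simp [chi_zero]
  | insert _ _ h ih => rw [Finset.sum_insert h, Finset.prod_insert h, chi_add, ih]

lemma chi_ne_one {c : ZMod 4} (hc : c ≠ 0) : chi c ≠ 1 := by
  intro h
  have := (IsPrimitiveRoot.pow_eq_one_iff_dvd z8_prim (2 * c.val)).mp h
  have hv : c.val < 4 := c.val_lt
  have hv0 : c.val ≠ 0 := fun h0 => hc ((ZMod.val_eq_zero c).mp h0)
  omega

lemma key (t : ZMod 4) : (∑ a : ZMod 4, eps a * chi (a * t)) * z8 ^ (t.val ^ 2) = 2 * z8 := by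
  have huniv : (univ : Finset (ZMod 4)) = {0, 1, 2, 3} := by decide
  have hsum : ∑ a : ZMod 4, eps a * chi (a * t) =
      eps 0 * chi (0 * t) + eps 1 * chi (1 * t) + eps 2 * chi (2 * t) + eps 3 * chi (3 * t) := by
    rw [huniv]
    rw [Finset.sum_insert (by decide), Finset.sum_insert (by decide),
      Finset.sum_insert (by decide), Finset.sum_singleton]
    ring
  rw [hsum]
  have h0 : ∀ u : ZMod 4, u = 0 ∨ u = 1 ∨ u = 2 ∨ u = 3 := by decide
  rcases h0 t with rfl | rfl | rfl | rfl
  · rw [show (0 : ZMod 4).val = 0 by decide]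
    norm_num [eps0, eps1, eps2, eps3, chi_zero]
    ring
  · rw [show (1 : ZMod 4).val = 1 by decide]
    rw [show ((0 : ZMod 4) * 1) = 0 by decide, show ((1 : ZMod 4) * 1) = 1 by decide,
      show ((2 : ZMod 4) * 1) = 2 by decide, show ((3 : ZMod 4) * 1) = 3 by decide,
      eps0, eps1, eps2, eps3, chi_zero, chi1, chi2, chi3]
    ring
  · rw [show (2 : ZMod 4).val = 2 by decide]
    rw [show ((0 : ZMod 4) * 2) = 0 by decide, show ((1 : ZMod 4) * 2) = 2 by decide,
      show ((2 : ZMod 4) * 2) = 0 by decide, show ((3 : ZMod 4) * 2) = 2 by decide,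
      eps0, eps1, eps2, eps3, chi_zero, chi2, show (2^2 : ℕ) = 4 by norm_num, z8_pow4]
    ring
  · rw [show (3 : ZMod 4).val = 3 by decide]
    rw [show ((0 : ZMod 4) * 3) = 0 by decide, show ((1 : ZMod 4) * 3) = 3 by decide,
      show ((2 : ZMod 4) * 3) = 2 by decide, show ((3 : ZMod 4) * 3) = 1 by decide,
      eps0, eps1, eps2, eps3, chi_zero, chi1, chi2, chi3,
      show (3^2 : ℕ) = 9 by norm_num, z8_pow9]
    ring

/-- A Type II `ZMod 4`-code of length n exists only if 8 divides n. -/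
theorem stmt5 {n : ℕ} (C : Submodule (ZMod 4) (Fin n → ZMod 4))
    (hsd : IsSelfDualZ4 C) (hII : ∀ x ∈ C, 8 ∣ euclWt x) :
    n % 8 = 0 := by
  classical
  set S : Finset (Fin n → ZMod 4) := univ.filter (· ∈ C) with hS
  have hmem : ∀ v, v ∈ S ↔ v ∈ C := by intro v; simp [hS]
  -- the "quadratic" weight ∑ (x i).val ^ 2 is divisible by 8 on C
  have hQdvd : ∀ x ∈ C, 8 ∣ ∑ i, (x i).val ^ 2 := by
    intro x hx
    have hpt : ∀ a : ZMod 4, a.val ^ 2 =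
        ((if a = 1 then 1 else 0) + 4 * (if a = 2 then 1 else 0) + (if a = 3 then 1 else 0))
          + 8 * (if a = 3 then 1 else 0) := by decide
    have hsum : ∑ i, (x i).val ^ 2 = euclWt x + 8 * (univ.filter fun i => x i = 3).card := by
      calc ∑ i, (x i).val ^ 2
          = ∑ i, (((if x i = 1 then 1 else 0) + 4 * (if x i = 2 then 1 else 0)
              + (if x i = 3 then 1 else 0)) + 8 * (if x i = 3 then 1 else 0)) :=
            Finset.sum_congr rfl fun i _ => hpt (x i)
        _ = euclWt x + 8 * (univ.filter fun i => x i = 3).card := by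
            simp only [Finset.sum_add_distrib, ← Finset.mul_sum, euclWt, Finset.card_filter]
    rw [hsum]
    obtain ⟨k, hk⟩ := hII x hx
    exact ⟨k + (univ.filter fun i => x i = 3).card, by omega⟩
  have hQone : ∀ x ∈ C, z8 ^ (∑ i, (x i).val ^ 2) = 1 := by
    intro x hx
    obtain ⟨k, hk⟩ := hQdvd x hx
    rw [hk, pow_mul, z8_pow8, one_pow]
  -- step A : for y ∈ C the full Fourier sum is (2 z8)^n
  have innerA : ∀ y ∈ C,
      (∑ x : Fin n → ZMod 4, (∏ i, eps (x i)) * chi (∑ i, x i * y i)) = (2 * z8) ^ n := by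
    intro y hy
    have h1 : ∀ x : Fin n → ZMod 4,
        (∏ i, eps (x i)) * chi (∑ i, x i * y i) = ∏ i, (eps (x i) * chi (x i * y i)) := by
      intro x
      rw [chi_sum, ← Finset.prod_mul_distrib]
    have h2 : (∑ x : Fin n → ZMod 4, (∏ i, eps (x i)) * chi (∑ i, x i * y i))
        = ∏ i, ∑ a : ZMod 4, eps a * chi (a * y i) := by
      rw [Fintype.prod_sum fun i a => eps a * chi (a * y i)]
      exact Finset.sum_congr rfl fun x _ => h1 x
    have h3 : (∏ i, ∑ a : ZMod 4, eps a * chi (a * y i)) * z8 ^ (∑ i, (y i).val ^ 2)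
        = (2 * z8) ^ n := by
      rw [← Finset.prod_pow_eq_pow_sum, ← Finset.prod_mul_distrib]
      rw [Finset.prod_congr rfl fun i _ => key (y i)]
      simp
    rw [h2, ← mul_one (∏ i, ∑ a : ZMod 4, eps a * chi (a * y i)), ← hQone y hy, h3]
  -- orthogonality : for x ∉ C the character sum over C vanishes
  have horth : ∀ x : Fin n → ZMod 4, x ∉ C → (∑ y ∈ S, chi (∑ i, x i * y i)) = 0 := by
    intro x hx
    have hne : ∃ y0 ∈ C, (∑ i, x i * y0 i) ≠ 0 := by
      by_contra h
      push_neg at h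
      exact hx ((hsd x).mpr h)
    obtain ⟨y0, hy0, hc⟩ := hne
    have hshift : (∑ y ∈ S, chi (∑ i, x i * (y + y0) i)) = ∑ y ∈ S, chi (∑ i, x i * y i) := by
      apply Finset.sum_equiv (Equiv.addRight y0)
      · intro y
        simp only [hmem, Equiv.coe_addRight]
        constructor
        · intro h; exact C.add_mem h hy0
        · intro h
          have := C.sub_mem h hy0
          simpa using this
      · intro y _; rfl
    have hbil : ∀ y : Fin n → ZMod 4,
        (∑ i, x i * (y + y0) i) = (∑ i, x i * y i) + ∑ i, x i * y0 i := by
      intro y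
      rw [← Finset.sum_add_distrib]
      exact Finset.sum_congr rfl fun i _ => by simp [mul_add]
    have heq : (∑ y ∈ S, chi (∑ i, x i * y i)) * chi (∑ i, x i * y0 i)
        = ∑ y ∈ S, chi (∑ i, x i * y i) := by
      rw [Finset.sum_mul]
      rw [← hshift]
      exact Finset.sum_congr rfl fun y _ => by rw [hbil, chi_add]
    by_contra h0
    exact (chi_ne_one hc) (mul_left_cancel₀ h0 (by rw [heq, mul_one]))
  -- the double sum, computed two ways
  set T : ℂ := ∑ y ∈ S, ∑ x : Fin n → ZMod 4, (∏ i, eps (x i)) * chi (∑ i, x i * y i) with hT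
  have E1 : T = (S.card : ℂ) * (2 * z8) ^ n := by
    rw [hT, Finset.sum_congr rfl fun y hy => innerA y ((hmem y).mp hy)]
    rw [Finset.sum_const, nsmul_eq_mul]
  have E2 : T = (S.card : ℂ) * (S.card : ℂ) := by
    rw [hT, Finset.sum_comm]
    have hsplit : ∀ x : Fin n → ZMod 4,
        (∑ y ∈ S, (∏ i, eps (x i)) * chi (∑ i, x i * y i))
          = (∏ i, eps (x i)) * ∑ y ∈ S, chi (∑ i, x i * y i) := fun x => (Finset.mul_sum _ _ _).symm
    rw [Finset.sum_congr rfl fun x _ => hsplit x]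
    rw [← Finset.sum_filter_add_sum_filter_not univ (· ∈ C)]
    have hz : (∑ x ∈ univ.filter (fun x => ¬ x ∈ C),
        (∏ i, eps (x i)) * ∑ y ∈ S, chi (∑ i, x i * y i)) = 0 := by
      apply Finset.sum_eq_zero
      intro x hx
      rw [horth x (by simpa using (Finset.mem_filter.mp hx).2), mul_zero]
    have hone : (∑ x ∈ univ.filter (· ∈ C),
        (∏ i, eps (x i)) * ∑ y ∈ S, chi (∑ i, x i * y i)) = (S.card : ℂ) * (S.card : ℂ) := by
      have hstep : ∀ x ∈ S, (∏ i, eps (x i)) * (∑ y ∈ S, chi (∑ i, x i * y i))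
          = (S.card : ℂ) := by
        intro x hx
        have hxC : x ∈ C := (hmem x).mp hx
        have hchi1 : ∀ y ∈ S, chi (∑ i, x i * y i) = 1 := by
          intro y hy
          rw [(hsd x).mp hxC y ((hmem y).mp hy), chi_zero]
        have hprod : (∏ i, eps (x i)) = 1 := by
          unfold eps
          rw [Finset.prod_pow_eq_pow_sum]
          exact hQone x hxC
        rw [hprod, one_mul, Finset.sum_congr rfl hchi1, Finset.sum_const, nsmul_eq_mul, mul_one]
      rw [show (univ.filter (· ∈ C)) = S from rfl, Finset.sum_congr rfl hstep,
        Finset.sum_const, nsmul_eq_mul]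
    rw [hz, hone, add_zero]
  -- conclude
  have hcard_pos : 0 < S.card := Finset.card_pos.mpr ⟨0, (hmem 0).mpr C.zero_mem⟩
  have hcast : (S.card : ℂ) ≠ 0 := Nat.cast_ne_zero.mpr hcard_pos.ne'
  have hmain : (2 * z8) ^ n = (S.card : ℂ) := mul_left_cancel₀ hcast (by rw [← E1, E2])
  have habs1 : ‖z8‖ = 1 := by
    have h8 : ‖z8‖ ^ 8 = 1 := by rw [← norm_pow, z8_pow8, norm_one]
    rcases lt_trichotomy ‖z8‖ 1 with h | h | h
    · have := pow_lt_one₀ (norm_nonneg z8) h (by norm_num : (8:ℕ) ≠ 0)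
      rw [h8] at this; exact absurd this (lt_irrefl 1)
    · exact h
    · have := one_lt_pow₀ h (by norm_num : (8:ℕ) ≠ 0)
      rw [h8] at this; exact absurd this (lt_irrefl 1)
  have habs : ((2 : ℝ)) ^ n = (S.card : ℝ) := by
    have := congrArg (‖·‖) hmain
    rwa [norm_pow, norm_mul, Complex.norm_two, habs1, mul_one, Complex.norm_natCast] at this
  have hcardn : (S.card : ℕ) = 2 ^ n := by
    have : ((2 ^ n : ℕ) : ℝ) = ((S.card : ℕ) : ℝ) := by push_cast; rw [habs]
    exact_mod_cast this.symm
  have hz8n : z8 ^ n = 1 := by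
    have h2n : ((2 : ℂ)) ^ n ≠ 0 := pow_ne_zero _ two_ne_zero
    apply mul_left_cancel₀ h2n
    rw [mul_one]
    rw [← mul_pow]
    rw [hmain, hcardn]
    push_cast
    ring
  obtain ⟨k, hk⟩ := (IsPrimitiveRoot.pow_eq_one_iff_dvd z8_prim n).mp hz8n
  omega
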